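/- Let d = 2, h = 0, β > 0, and let k : Z^2 → ℝ be symmetric with k(i) = 0 for |i| > 1 and k(0) = 0. Let Λ ⊂ Z^2 be finite, τ ∈ {−1,1}^{Z^2}, Λ_o = Λ ∩ Z^2_o and Λ_e = Λ ∩ Z^2_e. Then under the finite-volume Gibbs measure μ_Λ^τ for the potential Φ with Φ_{U_i}(σ) = −log cosh(β Σ_j k(i−j)σ_j), the restrictions σ_{Λ_o} and σ_{Λ_e} are independent: μ_Λ^τ = μ_{Λ_e}^τ ⊗ μ_{Λ_o}^τ as a product measure on {−1,1}^{Λ_e} × {−1,1}^{Λ_o}. -/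
import Mathlib


open MeasureTheory Filter

namespace PCA

noncomputable section

/-- Sites of the lattice `ℤ^d`. -/
abbrev Site (d : ℕ) := Fin d → ℤ

/-- Spin configurations on `ℤ^d` with spins in `{-1,1}` encoded by `Bool`. -/
abbrev Conf (d : ℕ) := Site d → Bool

/-- The real value of a spin: `true ↦ 1`, `false ↦ -1`. -/
def val (b : Bool) : ℝ := if b then 1 else -1

/-- Squared Euclidean norm of a site. -/
def normSq {d : ℕ} (i : Site d) : ℤ := ∑ t, (i t) ^ 2

/-- The local field `Σ_j k(i-j) η_j`. -/
def field {d : ℕ} (k : Site d → ℝ) (i : Site d) (η : Conf d) : ℝ :=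
  ∑' j : Site d, k (i - j) * val (η j)

/-- Single site updating probability
`p_i(s|η) = (1 + s tanh(β Σ_j k(i-j) η_j + β h))/2`. -/
def pval {d : ℕ} (β h : ℝ) (k : Site d → ℝ) (i : Site d) (s : Bool) (η : Conf d) : ℝ :=
  (1 + val s * Real.tanh (β * field k i η + β * h)) / 2

/-- The configuration equal to `a` on `Λ` and to `τ` outside `Λ`. -/
def fill {d : ℕ} (Λ : Finset (Site d)) (a : ↥Λ → Bool) (τ : Conf d) : Conf d :=
  fun j => if h : j ∈ Λ then a ⟨j, h⟩ else τ j

/-- Finite volume PCA transition probability with boundary condition `τ`: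
`P_Λ^τ(σ|η) = ∏_{i ∈ Λ} p_i(σ_i | η_Λ τ_{Λ^c})`. -/
def Pfin {d : ℕ} (β h : ℝ) (k : Site d → ℝ) (Λ : Finset (Site d)) (τ : Conf d)
    (σ η : ↥Λ → Bool) : ℝ :=
  ∏ i : ↥Λ, pval β h k i.1 (σ i) (fill Λ η τ)

/-- The boundary field `Σ_{j ∈ Λ^c} k(i-j) τ_j`. -/
def outField {d : ℕ} (k : Site d → ℝ) (Λ : Finset (Site d)) (τ : Conf d) (i : Site d) : ℝ :=
  ∑' j : Site d, if j ∈ Λ then 0 else k (i - j) * val (τ j)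

/-- Unnormalized stationary measure of the finite volume PCA:
`∏_{i∈Λ} e^{βhσ_i} cosh(β Σ_j k(i-j) σ̃_j + βh) e^{β σ_i Σ_{j∈Λ^c} k(i-j) τ_j}`. -/
def nuNum {d : ℕ} (β h : ℝ) (k : Site d → ℝ) (Λ : Finset (Site d)) (τ : Conf d)
    (σ : ↥Λ → Bool) : ℝ :=
  ∏ i : ↥Λ,
    Real.exp (β * h * val (σ i))
      * Real.cosh (β * field k i.1 (fill Λ σ τ) + β * h)
      * Real.exp (β * val (σ i) * outField k Λ τ i.1)

/-- The normalized stationary measure `ν_Λ^τ`. -/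
def nu {d : ℕ} (β h : ℝ) (k : Site d → ℝ) (Λ : Finset (Site d)) (τ : Conf d)
    (σ : ↥Λ → Bool) : ℝ :=
  nuNum β h k Λ τ σ / ∑ σ' : ↥Λ → Bool, nuNum β h k Λ τ σ'


/-- The cylinder set of configurations agreeing with `a` on `Λ`. -/
def cylB {d : ℕ} (Λ : Finset (Site d)) (a : ↥Λ → Bool) : Set (Conf d) :=
  {σ : Conf d | ∀ j : ↥Λ, σ j.1 = a j}

/-- `P` is the (infinite volume) PCA kernel with single site probabilities `pval β h k`:
on every cylinder, `P(·|η)` is the product of the single site probabilities. -/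
def IsPCAB {d : ℕ} (β h : ℝ) (k : Site d → ℝ)
    (P : ProbabilityTheory.Kernel (Conf d) (Conf d)) : Prop :=
  ∀ (η : Conf d) (Λ : Finset (Site d)) (a : ↥Λ → Bool),
    P η (cylB Λ a) = ∏ j : ↥Λ, ENNReal.ofReal (pval β h k j.1 (a j) η)

/-- The Hamiltonian `H_Λ^τ(a) = Σ_{A ∩ Λ ≠ ∅} Φ_A(a_Λ τ_{Λ^c})` for the potential
`Φ_{{i}}(σ) = -βhσ_i`, `Φ_{U_i}(σ) = -log cosh(β Σ_j k(i-j)σ_j + βh)`,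
`U_i = {j : k(i-j) ≠ 0}`, and `Φ_A = 0` otherwise. -/
def hamB {d : ℕ} (β h : ℝ) (k : Site d → ℝ) (Λ : Finset (Site d)) (a : ↥Λ → Bool)
    (τ : Conf d) : ℝ :=
  (∑ i : ↥Λ, -(β * h * val (a i))) +
    ∑' i : Site d,
      Set.indicator {i : Site d | ∃ j ∈ Λ, k (i - j) ≠ 0}
        (fun i => -Real.log (Real.cosh (β * field k i (fill Λ a τ) + β * h))) i

/-- The finite volume Gibbs weight `μ_Λ^τ(a) = exp(-H_Λ^τ(a))/Z_Λ^τ`. -/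
def gibbsWB {d : ℕ} (β h : ℝ) (k : Site d → ℝ) (Λ : Finset (Site d)) (a : ↥Λ → Bool)
    (τ : Conf d) : ℝ :=
  Real.exp (-hamB β h k Λ a τ) / ∑ b : ↥Λ → Bool, Real.exp (-hamB β h k Λ b τ)

/-- The σ-algebra generated by the spins outside `Λ`. -/
def outer {d : ℕ} (Λ : Finset (Site d)) : MeasurableSpace (Conf d) :=
  MeasurableSpace.comap (fun σ (j : {j : Site d // j ∉ Λ}) => σ j.1) MeasurableSpace.pi

/-- `μ` is a Gibbs measure for the potential associated to `β`, `h`, `k` (DLR equations):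
for every finite `Λ`, conditionally on the configuration outside `Λ`, the configuration
on `Λ` is distributed according to the finite volume Gibbs measure. -/
def IsGibbsB {d : ℕ} (β h : ℝ) (k : Site d → ℝ) (μ : Measure (Conf d)) : Prop :=
  ∀ (Λ : Finset (Site d)) (a : ↥Λ → Bool) (B : Set (Conf d)),
    MeasurableSet[outer Λ] B →
    μ (cylB Λ a ∩ B) = ∫⁻ τ in B, ENNReal.ofReal (gibbsWB β h k Λ a τ) ∂μ

/-- The even sublattice part `Λ_e = Λ ∩ ℤ²_e` of a finite volume. -/
def evenPart (Λ : Finset (Site 2)) : Finset (Site 2) :=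
  Λ.filter fun i => Even (i 0 + i 1)

/-- The odd sublattice part `Λ_o = Λ ∩ ℤ²_o` of a finite volume. -/
def oddPart (Λ : Finset (Site 2)) : Finset (Site 2) :=
  Λ.filter fun i => ¬ Even (i 0 + i 1)

section Aux15

/-- A unit vector in direction `t`. -/
def ee (t : Fin 2) : Site 2 := fun s => if s = t then 1 else 0

/-- The set of possible "influencing" sites: nearest neighbours of `Λ`. -/
def nbrs (Λ : Finset (Site 2)) : Finset (Site 2) :=
  Λ.biUnion fun j => {j + ee 0, j - ee 0, j + ee 1, j - ee 1}

lemma int_parity {x y : ℤ} (h1 : x ^ 2 + y ^ 2 ≤ 1) (h2 : ¬(x = 0 ∧ y = 0)) :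
    ¬ Even (x + y) := by
  have hx1 : x ≤ 1 := by nlinarith [sq_nonneg y]
  have hx2 : -1 ≤ x := by nlinarith [sq_nonneg y]
  have hy1 : y ≤ 1 := by nlinarith [sq_nonneg x]
  have hy2 : -1 ≤ y := by nlinarith [sq_nonneg x]
  interval_cases x <;> interval_cases y <;> revert h1 h2 <;> decide

variable {k : Site 2 → ℝ}

lemma knz (hrange : ∀ i : Site 2, (1 : ℝ) < (normSq i : ℝ) → k i = 0) (hk0 : k 0 = 0)
    {i j : Site 2} (h : k (i - j) ≠ 0) :
    (i 0 - j 0) ^ 2 + (i 1 - j 1) ^ 2 ≤ 1 ∧ ¬(i 0 - j 0 = 0 ∧ i 1 - j 1 = 0) := by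
  have hns : normSq (i - j) = (i 0 - j 0) ^ 2 + (i 1 - j 1) ^ 2 := by
    simp [normSq, Fin.sum_univ_two]
  constructor
  · by_contra hc
    push_neg at hc
    apply h
    apply hrange
    have : (1 : ℤ) < normSq (i - j) := by rw [hns]; exact hc
    exact_mod_cast this
  · rintro ⟨h0, h1⟩
    apply h
    have hij : i - j = 0 := by
      funext t
      fin_cases t
      · simpa using h0
      · simpa using h1
    rw [hij]; exact hk0

lemma parity_opp (hrange : ∀ i : Site 2, (1 : ℝ) < (normSq i : ℝ) → k i = 0) (hk0 : k 0 = 0)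
    {i j : Site 2} (h : k (i - j) ≠ 0) :
    (Even (i 0 + i 1) ↔ ¬ Even (j 0 + j 1)) := by
  obtain ⟨h1, h2⟩ := knz hrange hk0 h
  have h3 := int_parity h1 h2
  simp only [Int.even_iff] at h3 ⊢
  omega

lemma mem_nbrs (hrange : ∀ i : Site 2, (1 : ℝ) < (normSq i : ℝ) → k i = 0) (hk0 : k 0 = 0)
    {Λ : Finset (Site 2)} {i j : Site 2} (h : k (i - j) ≠ 0) (hj : j ∈ Λ) :
    i ∈ nbrs Λ := by
  obtain ⟨h1, h2⟩ := knz hrange hk0 h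
  refine Finset.mem_biUnion.mpr ⟨j, hj, ?_⟩
  simp only [Finset.mem_insert, Finset.mem_singleton]
  have key : ∀ d : Site 2, i 0 - j 0 = d 0 → i 1 - j 1 = d 1 → i = j + d := by
    intro d hd0 hd1
    funext t
    fin_cases t
    · show i 0 = j 0 + d 0
      omega
    · show i 1 = j 1 + d 1
      omega
  have key' : ∀ d : Site 2, i 0 - j 0 = - d 0 → i 1 - j 1 = - d 1 → i = j - d := by
    intro d hd0 hd1
    funext t
    fin_cases t
    · show i 0 = j 0 - d 0
      omega
    · show i 1 = j 1 - d 1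
      omega
  have he00 : ee 0 0 = 1 := rfl
  have he01 : ee 0 1 = 0 := rfl
  have he10 : ee 1 0 = 0 := rfl
  have he11 : ee 1 1 = 1 := rfl
  have hx : i 0 - j 0 = -1 ∨ i 0 - j 0 = 0 ∨ i 0 - j 0 = 1 := by
    have : i 0 - j 0 ≤ 1 := by nlinarith [sq_nonneg (i 1 - j 1)]
    have : -1 ≤ i 0 - j 0 := by nlinarith [sq_nonneg (i 1 - j 1)]
    omega
  have hy : i 1 - j 1 = -1 ∨ i 1 - j 1 = 0 ∨ i 1 - j 1 = 1 := by
    have : i 1 - j 1 ≤ 1 := by nlinarith [sq_nonneg (i 0 - j 0)]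
    have : -1 ≤ i 1 - j 1 := by nlinarith [sq_nonneg (i 0 - j 0)]
    omega
  rcases hx with hx | hx | hx <;> rcases hy with hy | hy | hy
  · exfalso; rw [hx, hy] at h1; norm_num at h1
  · exact Or.inr (Or.inl (key' (ee 0) (by rw [he00]; omega) (by rw [he01]; omega)))
  · exfalso; rw [hx, hy] at h1; norm_num at h1
  · exact Or.inr (Or.inr (Or.inr (key' (ee 1) (by rw [he10]; omega) (by rw [he11]; omega))))
  · exact absurd ⟨hx, hy⟩ h2
  · exact Or.inr (Or.inr (Or.inl (key (ee 1) (by rw [he10]; omega) (by rw [he11]; omega))))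
  · exfalso; rw [hx, hy] at h1; norm_num at h1
  · exact Or.inl (key (ee 0) (by rw [he00]; omega) (by rw [he01]; omega))
  · exfalso; rw [hx, hy] at h1; norm_num at h1

lemma field_fill_filter (i : Site 2) (Λ : Finset (Site 2)) (p : Site 2 → Prop)
    [DecidablePred p] (a : ↥Λ → Bool) (τ : Conf 2)
    (hp : ∀ j : Site 2, k (i - j) ≠ 0 → p j) :
    field k i (fill Λ a τ) =
      field k i (fill (Λ.filter p)
        (fun j => a ⟨j.1, (Finset.mem_filter.mp j.2).1⟩) τ) := by
  unfold field
  apply tsum_congr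
  intro j
  by_cases h : k (i - j) = 0
  · rw [h]; ring
  · have hpj := hp j h
    congr 1
    unfold fill
    by_cases hj : j ∈ Λ
    · rw [dif_pos hj, dif_pos (Finset.mem_filter.mpr ⟨hj, hpj⟩)]
    · rw [dif_neg hj, dif_neg fun hc => hj (Finset.mem_filter.mp hc).1]

lemma field_even (hrange : ∀ i : Site 2, (1 : ℝ) < (normSq i : ℝ) → k i = 0) (hk0 : k 0 = 0)
    {i : Site 2} (hi : ¬ Even (i 0 + i 1)) (Λ : Finset (Site 2)) (a : ↥Λ → Bool) (τ : Conf 2) :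
    field k i (fill Λ a τ) =
      field k i (fill (evenPart Λ)
        (fun j : ↥(evenPart Λ) => a ⟨j.1, Finset.mem_of_mem_filter j.1 j.2⟩) τ) := by
  exact field_fill_filter i Λ (fun j => Even (j 0 + j 1)) a τ fun j hk => by
    by_contra hc
    exact hi ((parity_opp hrange hk0 hk).mpr hc)

lemma field_odd (hrange : ∀ i : Site 2, (1 : ℝ) < (normSq i : ℝ) → k i = 0) (hk0 : k 0 = 0)
    {i : Site 2} (hi : Even (i 0 + i 1)) (Λ : Finset (Site 2)) (a : ↥Λ → Bool) (τ : Conf 2) :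
    field k i (fill Λ a τ) =
      field k i (fill (oddPart Λ)
        (fun j : ↥(oddPart Λ) => a ⟨j.1, Finset.mem_of_mem_filter j.1 j.2⟩) τ) := by
  exact field_fill_filter i Λ (fun j => ¬ Even (j 0 + j 1)) a τ fun j hk =>
    (parity_opp hrange hk0 hk).mp hi

lemma ham_split (β : ℝ) (hrange : ∀ i : Site 2, (1 : ℝ) < (normSq i : ℝ) → k i = 0)
    (hk0 : k 0 = 0) (Λ : Finset (Site 2)) (a : ↥Λ → Bool) (τ : Conf 2) :
    hamB β 0 k Λ a τ =
      hamB β 0 k (evenPart Λ)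
          (fun j : ↥(evenPart Λ) => a ⟨j.1, Finset.mem_of_mem_filter j.1 j.2⟩) τ +
        hamB β 0 k (oddPart Λ)
          (fun j : ↥(oddPart Λ) => a ⟨j.1, Finset.mem_of_mem_filter j.1 j.2⟩) τ := by
  unfold hamB
  simp only [mul_zero, zero_mul, neg_zero, Finset.sum_const_zero, zero_add, add_zero]
  set aE := fun j : ↥(evenPart Λ) => a ⟨j.1, Finset.mem_of_mem_filter j.1 j.2⟩ with haE
  set aO := fun j : ↥(oddPart Λ) => a ⟨j.1, Finset.mem_of_mem_filter j.1 j.2⟩ with haO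
  have h1 : ∀ i ∉ nbrs Λ,
      Set.indicator {i : Site 2 | ∃ j ∈ Λ, k (i - j) ≠ 0}
        (fun i => -Real.log (Real.cosh (β * field k i (fill Λ a τ)))) i = 0 := by
    intro i hi
    apply Set.indicator_of_notMem
    rintro ⟨j, hj, hkj⟩
    exact hi (mem_nbrs hrange hk0 hkj hj)
  have h2 : ∀ i ∉ nbrs Λ,
      Set.indicator {i : Site 2 | ∃ j ∈ evenPart Λ, k (i - j) ≠ 0}
        (fun i => -Real.log (Real.cosh (β * field k i (fill (evenPart Λ) aE τ)))) i = 0 := by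
    intro i hi
    apply Set.indicator_of_notMem
    rintro ⟨j, hj, hkj⟩
    exact hi (mem_nbrs hrange hk0 hkj (Finset.mem_of_mem_filter j hj))
  have h3 : ∀ i ∉ nbrs Λ,
      Set.indicator {i : Site 2 | ∃ j ∈ oddPart Λ, k (i - j) ≠ 0}
        (fun i => -Real.log (Real.cosh (β * field k i (fill (oddPart Λ) aO τ)))) i = 0 := by
    intro i hi
    apply Set.indicator_of_notMem
    rintro ⟨j, hj, hkj⟩
    exact hi (mem_nbrs hrange hk0 hkj (Finset.mem_of_mem_filter j hj))
  rw [tsum_eq_sum h1, tsum_eq_sum h2, tsum_eq_sum h3, ← Finset.sum_add_distrib]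
  refine Finset.sum_congr rfl fun i _ => ?_
  by_cases hpar : Even (i 0 + i 1)
  · have hE : i ∉ {i : Site 2 | ∃ j ∈ evenPart Λ, k (i - j) ≠ 0} := by
      rintro ⟨j, hj, hkj⟩
      exact ((parity_opp hrange hk0 hkj).mp hpar) (Finset.mem_filter.mp hj).2
    rw [Set.indicator_of_notMem hE, zero_add]
    by_cases hi : i ∈ {i : Site 2 | ∃ j ∈ Λ, k (i - j) ≠ 0}
    · have hiO : i ∈ {i : Site 2 | ∃ j ∈ oddPart Λ, k (i - j) ≠ 0} := by
        obtain ⟨j, hj, hkj⟩ := hi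
        exact ⟨j, Finset.mem_filter.mpr ⟨hj, (parity_opp hrange hk0 hkj).mp hpar⟩, hkj⟩
      rw [Set.indicator_of_mem hi, Set.indicator_of_mem hiO,
        field_odd hrange hk0 hpar Λ a τ]
    · have hiO : i ∉ {i : Site 2 | ∃ j ∈ oddPart Λ, k (i - j) ≠ 0} := by
        rintro ⟨j, hj, hkj⟩
        exact hi ⟨j, Finset.mem_of_mem_filter j hj, hkj⟩
      rw [Set.indicator_of_notMem hi, Set.indicator_of_notMem hiO]
  · have hO : i ∉ {i : Site 2 | ∃ j ∈ oddPart Λ, k (i - j) ≠ 0} := by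
      rintro ⟨j, hj, hkj⟩
      have hje : Even (j 0 + j 1) := by
        by_contra hc
        exact hpar ((parity_opp hrange hk0 hkj).mpr hc)
      exact (Finset.mem_filter.mp hj).2 hje
    rw [Set.indicator_of_notMem hO, add_zero]
    by_cases hi : i ∈ {i : Site 2 | ∃ j ∈ Λ, k (i - j) ≠ 0}
    · have hiE : i ∈ {i : Site 2 | ∃ j ∈ evenPart Λ, k (i - j) ≠ 0} := by
        obtain ⟨j, hj, hkj⟩ := hi
        have hje : Even (j 0 + j 1) := by
          by_contra hc
          exact hpar ((parity_opp hrange hk0 hkj).mpr hc)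
        exact ⟨j, Finset.mem_filter.mpr ⟨hj, hje⟩, hkj⟩
      rw [Set.indicator_of_mem hi, Set.indicator_of_mem hiE,
        field_even hrange hk0 hpar Λ a τ]
    · have hiE : i ∉ {i : Site 2 | ∃ j ∈ evenPart Λ, k (i - j) ≠ 0} := by
        rintro ⟨j, hj, hkj⟩
        exact hi ⟨j, Finset.mem_of_mem_filter j hj, hkj⟩
      rw [Set.indicator_of_notMem hi, Set.indicator_of_notMem hiE]

/-- The equivalence splitting a configuration on `Λ` into its even and odd parts. -/
def splitEquiv (Λ : Finset (Site 2)) :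
    (↥Λ → Bool) ≃ (↥(evenPart Λ) → Bool) × (↥(oddPart Λ) → Bool) where
  toFun b :=
    (fun j => b ⟨j.1, Finset.mem_of_mem_filter j.1 j.2⟩,
     fun j => b ⟨j.1, Finset.mem_of_mem_filter j.1 j.2⟩)
  invFun p i :=
    if h : Even (i.1 0 + i.1 1) then p.1 ⟨i.1, Finset.mem_filter.mpr ⟨i.2, h⟩⟩
    else p.2 ⟨i.1, Finset.mem_filter.mpr ⟨i.2, h⟩⟩
  left_inv b := by
    funext i
    dsimp only
    split <;> rfl
  right_inv p := by
    refine Prod.ext ?_ ?_ <;> funext j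
    · have hj : Even (j.1 0 + j.1 1) := (Finset.mem_filter.mp j.2).2
      dsimp only
      rw [dif_pos hj]
    · have hj : ¬ Even (j.1 0 + j.1 1) := (Finset.mem_filter.mp j.2).2
      dsimp only
      rw [dif_neg hj]

lemma Z_split (β : ℝ) (hrange : ∀ i : Site 2, (1 : ℝ) < (normSq i : ℝ) → k i = 0)
    (hk0 : k 0 = 0) (Λ : Finset (Site 2)) (τ : Conf 2) :
    ∑ b : ↥Λ → Bool, Real.exp (-hamB β 0 k Λ b τ) =
      (∑ b : ↥(evenPart Λ) → Bool, Real.exp (-hamB β 0 k (evenPart Λ) b τ)) *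
        ∑ b : ↥(oddPart Λ) → Bool, Real.exp (-hamB β 0 k (oddPart Λ) b τ) := by
  have h1 : ∑ b : ↥Λ → Bool, Real.exp (-hamB β 0 k Λ b τ)
      = ∑ p : (↥(evenPart Λ) → Bool) × (↥(oddPart Λ) → Bool),
          Real.exp (-hamB β 0 k (evenPart Λ) p.1 τ) *
            Real.exp (-hamB β 0 k (oddPart Λ) p.2 τ) :=
    Fintype.sum_equiv (splitEquiv Λ) _ _ fun b => by
      rw [ham_split β hrange hk0 Λ b τ, neg_add, Real.exp_add]
      rfl
  rw [h1, Fintype.sum_prod_type, Finset.sum_mul_sum]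

end Aux15

/-- (`d = 2`, `h = 0`, `k(0) = 0`, range one.) Under the finite volume
Gibbs measure `μ_Λ^τ`, the spins on the odd and even sublattices are independent:
`μ_Λ^τ = μ_{Λ_e}^τ ⊗ μ_{Λ_o}^τ`. -/
theorem stmt15 (β : ℝ) (hβ : 0 < β)
    (k : Site 2 → ℝ) (hsym : ∀ i : Site 2, k (-i) = k i)
    (hrange : ∀ i : Site 2, (1 : ℝ) < (normSq i : ℝ) → k i = 0)
    (hk0 : k 0 = 0)
    (Λ : Finset (Site 2)) (τ : Conf 2) :
    ∀ a : ↥Λ → Bool,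
      gibbsWB β 0 k Λ a τ =
        gibbsWB β 0 k (evenPart Λ)
            (fun j : ↥(evenPart Λ) => a ⟨j.1, Finset.mem_of_mem_filter j.1 j.2⟩) τ *
          gibbsWB β 0 k (oddPart Λ)
            (fun j : ↥(oddPart Λ) => a ⟨j.1, Finset.mem_of_mem_filter j.1 j.2⟩) τ := by
  intro a
  unfold gibbsWB
  rw [ham_split β hrange hk0 Λ a τ, Z_split β hrange hk0 Λ τ, neg_add, Real.exp_add,
    div_mul_div_comm]

end
end PCA
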